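/- arXiv:1704.08478 — 2 statements merged into one kernel-verified Lean document; each statement's English description precedes it below -/
import Mathlib

section
/- With M, M₁, M₂, η, ξ as in the amalgam setup, suppose that for every pair (X,Y) of elements of the lattice 𝓛(M₁,M₂) (sets whose intersections with E₁ and E₂ are flats in M₁ resp. M₂), at least one of η or ξ satisfies the submodular inequality on (X,Y). Then ξ is submodular on all of 𝒫(E), and hence is the rank function of the proper amalgam of M₁ and M₂ along M. -/
open Set

namespace StickyKantor

variable {α : Type*}

/-- The rank of a set in a matroid, as an integer (junk value `0` when infinite). -/
noncomputable def rk (M : Matroid α) (X : Set α) : ℤ :=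
  ((⨆ I ∈ {I : Set α | M.Indep I ∧ I ⊆ X}, I.encard).toNat : ℤ)

/-- The modular defect of a pair of sets. -/
noncomputable def mdefect (M : Matroid α) (X Y : Set α) : ℤ :=
  rk M X + rk M Y - rk M (X ∪ Y) - rk M (X ∩ Y)

/-- A modular pair of sets. -/
def ModularPair (M : Matroid α) (X Y : Set α) : Prop :=
  rk M X + rk M Y = rk M (X ∪ Y) + rk M (X ∩ Y)

/-- `M'` is an extension of `M`: it has a larger ground set and restricts to `M`. -/
def IsExtension (M' M : Matroid α) : Prop :=
  M.E ⊆ M'.E ∧ M = M'.restrict M.E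

/-- A point: a rank-1 flat. -/
def IsPoint (M : Matroid α) (p : Set α) : Prop := M.IsFlat p ∧ rk M p = 1

/-- A line: a rank-2 flat. -/
def IsLine (M : Matroid α) (l : Set α) : Prop := M.IsFlat l ∧ rk M l = 2

/-- A plane: a rank-3 flat. -/
def IsPlane (M : Matroid α) (e : Set α) : Prop := M.IsFlat e ∧ rk M e = 3

/-- Two lines are coplanar if their join has rank at most 3. -/
def Coplanar (M : Matroid α) (l₁ l₂ : Set α) : Prop := rk M (l₁ ∪ l₂) ≤ 3

/-- A hyperplane: a maximal proper flat. -/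
def IsHyperplane (M : Matroid α) (H : Set α) : Prop :=
  M.IsFlat H ∧ H ≠ M.E ∧ ∀ F, M.IsFlat F → H ⊂ F → F = M.E

/-- A matroid is hypermodular if every pair of hyperplanes is a modular pair. -/
def Hypermodular (M : Matroid α) : Prop :=
  ∀ H₁ H₂, IsHyperplane M H₁ → IsHyperplane M H₂ → ModularPair M H₁ H₂

/-- A matroid is modular if every pair of flats is a modular pair. -/
def Modular (M : Matroid α) : Prop :=
  ∀ F₁ F₂, M.IsFlat F₁ → M.IsFlat F₂ → ModularPair M F₁ F₂

/-- A modular cut: an up-closed family of flats closed under intersections of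
modular pairs. -/
def IsModularCut (M : Matroid α) (𝓜 : Set (Set α)) : Prop :=
  (∀ F ∈ 𝓜, M.IsFlat F) ∧
  (∀ F ∈ 𝓜, ∀ F', M.IsFlat F' → F ⊆ F' → F' ∈ 𝓜) ∧
  (∀ F₁ ∈ 𝓜, ∀ F₂ ∈ 𝓜, ModularPair M F₁ F₂ → F₁ ∩ F₂ ∈ 𝓜)

/-- The principal modular cut of a flat `F`. -/
def principalCut (M : Matroid α) (F : Set α) : Set (Set α) :=
  {G | M.IsFlat G ∧ F ⊆ G}

/-- The modular cut generated by a family of flats. -/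
def genCut (M : Matroid α) (A : Set (Set α)) : Set (Set α) :=
  ⋂₀ {𝓜 | IsModularCut M 𝓜 ∧ A ⊆ 𝓜}

/-- A non-modular pair of flats is intersectable if the modular cut it generates is
not the principal modular cut of its intersection. -/
def Intersectable (M : Matroid α) (X Y : Set α) : Prop :=
  genCut M {X, Y} ≠ principalCut M (X ∩ Y)

/-- A matroid is OTE (only trivially extendable) if every nonempty modular cut
is principal. -/
def OTE (M : Matroid α) : Prop :=
  ∀ 𝓜, IsModularCut M 𝓜 → 𝓜 ≠ ∅ → ∃ F, M.IsFlat F ∧ 𝓜 = principalCut M F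

/-- A matroid is sticky if every pair of extensions meeting exactly in its ground set
has an amalgam. -/
def Sticky (M : Matroid α) : Prop :=
  ∀ N₁ N₂ : Matroid α, IsExtension N₁ M → IsExtension N₂ M → N₁.E ∩ N₂.E = M.E →
    ∃ A : Matroid α, A.E = N₁.E ∪ N₂.E ∧ IsExtension A N₁ ∧ IsExtension A N₂

/-- The function `η` of the amalgam construction. -/
noncomputable def eta (M M₁ M₂ : Matroid α) (X : Set α) : ℤ :=
  rk M₁ (X ∩ M₁.E) + rk M₂ (X ∩ M₂.E) - rk M (X ∩ M.E)

/-- The function `ξ` of the amalgam construction. -/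
noncomputable def xi (M M₁ M₂ : Matroid α) (X : Set α) : ℤ :=
  sInf {n : ℤ | ∃ Y, X ⊆ Y ∧ Y ⊆ M₁.E ∪ M₂.E ∧ n = eta M M₁ M₂ Y}

/-- The lattice `𝓛(M₁,M₂)` of sets whose traces on both ground sets are flats. -/
def latticeL (M₁ M₂ : Matroid α) : Set (Set α) :=
  {X | X ⊆ M₁.E ∪ M₂.E ∧ M₁.IsFlat (X ∩ M₁.E) ∧ M₂.IsFlat (X ∩ M₂.E)}

section RankFacts

variable {M M' : Matroid α} {I J X Y F F' : Set α} {e : α}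

lemma closure_flat (M : Matroid α) (X : Set α) : M.IsFlat (M.closure X) := by
  rw [Matroid.closure_def, sInter_eq_iInter]
  haveI : Nonempty {F // F ∈ {F | M.IsFlat F ∧ X ∩ M.E ⊆ F}} :=
    ⟨⟨M.E, M.ground_isFlat, inter_subset_right⟩⟩
  exact Matroid.IsFlat.iInter fun F => F.2.1

lemma rk_nonneg (M : Matroid α) (X : Set α) : 0 ≤ rk M X := Int.ofNat_nonneg _

lemma rk_eq_basis' [M.RankFinite] (hI : M.IsBasis' I X) : rk M X = (I.ncard : ℤ) := by
  have hfin : I.Finite := hI.indep.finite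
  have hsup : (⨆ J ∈ {J : Set α | M.Indep J ∧ J ⊆ X}, J.encard) = I.encard := by
    apply le_antisymm
    · refine iSup₂_le fun J hJ => ?_
      obtain ⟨K, hK, hJK⟩ := hJ.1.subset_isBasis'_of_subset hJ.2
      exact le_trans (encard_mono hJK) (hK.encard_eq_encard hI).le
    · exact le_iSup₂ (f := fun J (_ : J ∈ {J : Set α | M.Indep J ∧ J ⊆ X}) => J.encard)
        I ⟨hI.indep, hI.subset⟩
  rw [rk, hsup, ncard_def]

lemma rk_indep [M.RankFinite] (hI : M.Indep I) : rk M I = (I.ncard : ℤ) :=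
  rk_eq_basis' hI.isBasis_self.isBasis'

lemma rk_empty (M : Matroid α) [M.RankFinite] : rk M ∅ = 0 := by
  simpa using rk_indep M.empty_indep

lemma rk_mono [M.RankFinite] (hXY : X ⊆ Y) : rk M X ≤ rk M Y := by
  obtain ⟨I, hI⟩ := M.exists_isBasis' X
  obtain ⟨J, hJ, hIJ⟩ := hI.indep.subset_isBasis'_of_subset (hI.subset.trans hXY)
  rw [rk_eq_basis' hI, rk_eq_basis' hJ]
  exact_mod_cast ncard_le_ncard hIJ hJ.indep.finite

lemma rk_indep_le [M.RankFinite] (hI : M.Indep I) (hIX : I ⊆ X) : (I.ncard : ℤ) ≤ rk M X := by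
  rw [← rk_indep hI]; exact rk_mono hIX

lemma rk_insert_le (M : Matroid α) [M.RankFinite] (e : α) (X : Set α) :
    rk M (insert e X) ≤ rk M X + 1 := by
  obtain ⟨I, hI⟩ := M.exists_isBasis' X
  obtain ⟨J, hJ, hIJ⟩ := hI.indep.subset_isBasis'_of_subset (hI.subset.trans (subset_insert _ _))
  have hJsub : J ⊆ insert e I := by
    intro f hfJ
    rcases hJ.subset hfJ with rfl | hfX
    · exact mem_insert _ _
    · exact Or.inr (hI.mem_of_insert_indep hfX
        (hJ.indep.subset (insert_subset hfJ hIJ)))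
  rw [rk_eq_basis' hI, rk_eq_basis' hJ]
  calc (J.ncard : ℤ) ≤ ((insert e I).ncard : ℤ) := by
        exact_mod_cast ncard_le_ncard hJsub (hI.indep.finite.insert e)
    _ ≤ (I.ncard : ℤ) + 1 := by exact_mod_cast ncard_insert_le e I

lemma rk_insert_eq_of_mem_closure [M.RankFinite] (he : e ∈ M.closure X) :
    rk M (insert e X) = rk M X := by
  obtain ⟨I, hI⟩ := M.exists_isBasis' X
  have hI' : M.IsBasis' I (insert e X) := by
    rw [Matroid.isBasis'_iff_isBasis_closure] at hI ⊢
    rw [Matroid.closure_insert_eq_of_mem_closure he]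
    exact ⟨hI.1, hI.2.trans (subset_insert _ _)⟩
  rw [rk_eq_basis' hI, rk_eq_basis' hI']

lemma rk_closure_eq (M : Matroid α) [M.RankFinite] (X : Set α) :
    rk M (M.closure X) = rk M X := by
  obtain ⟨I, hI⟩ := M.exists_isBasis' X
  have hI' : M.IsBasis' I (M.closure X) := (hI.isBasis_closure_right).isBasis'
  rw [rk_eq_basis' hI, rk_eq_basis' hI']

lemma mem_closure_of_rk_insert_le [M.RankFinite] (heE : e ∈ M.E)
    (h : rk M (insert e X) ≤ rk M X) : e ∈ M.closure X := by
  by_contra hecl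
  obtain ⟨I, hI⟩ := M.exists_isBasis' X
  have heI : e ∉ I := fun heI => hecl (M.mem_closure_of_mem' (hI.subset heI) heE)
  have hind : M.Indep (insert e I) := by
    rw [hI.indep.insert_indep_iff_of_notMem heI, hI.closure_eq_closure]
    exact ⟨heE, hecl⟩
  have := rk_indep_le hind (insert_subset (mem_insert _ _) (hI.subset.trans (subset_insert _ _)))
  rw [ncard_insert_of_notMem heI hI.indep.finite, rk_eq_basis' hI] at *
  omega

lemma subset_flat_of_rk_le [M.RankFinite] (hF : M.IsFlat F) (hF' : F' ⊆ M.E) (hFF' : F ⊆ F')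
    (hrk : rk M F' ≤ rk M F) : F' ⊆ F := by
  intro e he
  have h1 : rk M (insert e F) ≤ rk M F :=
    le_trans (rk_mono (insert_subset he hFF')) hrk
  have := mem_closure_of_rk_insert_le (hF' he) h1
  rwa [hF.closure] at this

lemma rk_submod (M : Matroid α) [M.RankFinite] (X Y : Set α) :
    rk M (X ∩ Y) + rk M (X ∪ Y) ≤ rk M X + rk M Y := by
  obtain ⟨I, hI⟩ := M.exists_isBasis' (X ∩ Y)
  obtain ⟨J, hJ, hIJ⟩ := hI.indep.subset_isBasis'_of_subset
    (hI.subset.trans (inter_subset_left.trans subset_union_left))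
  have hJfin : J.Finite := hJ.indep.finite
  have h1 : rk M (X ∩ Y) ≤ ((J ∩ (X ∩ Y)).ncard : ℤ) := by
    rw [rk_eq_basis' hI]
    exact_mod_cast ncard_le_ncard (subset_inter hIJ hI.subset) (hJfin.inter_of_left _)
  have h2 : ((J ∩ X).ncard : ℤ) ≤ rk M X :=
    rk_indep_le (hJ.indep.subset inter_subset_left) inter_subset_right
  have h3 : ((J ∩ Y).ncard : ℤ) ≤ rk M Y :=
    rk_indep_le (hJ.indep.subset inter_subset_left) inter_subset_right
  have hcard : (J ∩ X).ncard + (J ∩ Y).ncard = J.ncard + (J ∩ (X ∩ Y)).ncard := by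
    have hu : (J ∩ X) ∪ (J ∩ Y) = J := by
      rw [← inter_union_distrib_left, inter_eq_left]; exact hJ.subset
    have hi : (J ∩ X) ∩ (J ∩ Y) = J ∩ (X ∩ Y) := by
      ext x; simp [mem_inter_iff]; tauto
    rw [← ncard_union_add_ncard_inter (J ∩ X) (J ∩ Y) (hJfin.inter_of_left _)
      (hJfin.inter_of_left _), hu, hi]
  rw [rk_eq_basis' hJ]
  have hcard' : ((J ∩ X).ncard : ℤ) + ((J ∩ Y).ncard : ℤ)
      = (J.ncard : ℤ) + ((J ∩ (X ∩ Y)).ncard : ℤ) := by exact_mod_cast hcard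
  omega

/-- Local form of submodularity used repeatedly: for `A' ⊆ A`,
adding `B` to `A` increases rank by at most as much as adding `B` to `A'`. -/
lemma rk_union_le_rk_add [M.RankFinite] {A A' B : Set α} (h : A' ⊆ A) :
    rk M (A ∪ B) + rk M A' ≤ rk M A + rk M (A' ∪ B) := by
  have hsub := rk_submod M A (A' ∪ B)
  have h1 : A ∪ (A' ∪ B) = A ∪ B := by
    rw [← union_assoc, union_eq_left.2 h]
  have h2 : rk M A' ≤ rk M (A ∩ (A' ∪ B)) :=
    rk_mono (subset_inter h subset_union_left)
  rw [h1] at hsub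
  omega

lemma rk_restrict_eq (hM : M = M'.restrict Y) (hX : X ⊆ Y) : rk M X = rk M' X := by
  have : {I : Set α | M.Indep I ∧ I ⊆ X} = {I : Set α | M'.Indep I ∧ I ⊆ X} := by
    ext I
    simp only [mem_setOf_eq, hM, Matroid.restrict_indep_iff]
    exact ⟨fun h => ⟨h.1.1, h.2⟩, fun h => ⟨⟨h.1, h.2.trans hX⟩, h.2⟩⟩
  rw [rk, this, rk]

lemma indep_iff_rk_eq [M.RankFinite] (hIE : I ⊆ M.E) :
    M.Indep I ↔ I.Finite ∧ rk M I = (I.ncard : ℤ) := by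
  refine ⟨fun h => ⟨h.finite, rk_indep h⟩, fun ⟨hfin, hrk⟩ => ?_⟩
  obtain ⟨J, hJ⟩ := M.exists_isBasis' I
  have hcard : I.ncard ≤ J.ncard := by
    have := rk_eq_basis' hJ
    omega
  have heq := eq_of_subset_of_ncard_le hJ.subset hcard hfin
  exact heq ▸ hJ.indep

end RankFacts

section Amalgam

variable {M M₁ M₂ : Matroid α} {X Y Z : Set α} {e : α}

lemma eta_comm (X : Set α) : eta M M₁ M₂ X = eta M M₂ M₁ X := by
  simp only [eta]; ring

lemma rkM_eq₁ (hext₁ : IsExtension M₁ M) (hZ : Z ⊆ M.E) : rk M Z = rk M₁ Z :=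
  rk_restrict_eq hext₁.2 hZ

lemma eta_nonneg [M₂.RankFinite] (hext₂ : IsExtension M₂ M) (hT : M₁.E ∩ M₂.E = M.E)
    (X : Set α) : 0 ≤ eta M M₁ M₂ X := by
  have hTE₂ : M.E ⊆ M₂.E := hT ▸ inter_subset_right
  have h1 : rk M (X ∩ M.E) = rk M₂ (X ∩ M.E) := rkM_eq₁ hext₂ inter_subset_right
  have h2 : rk M₂ (X ∩ M.E) ≤ rk M₂ (X ∩ M₂.E) :=
    rk_mono (inter_subset_inter_right X hTE₂)
  have h3 := rk_nonneg M₁ (X ∩ M₁.E)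
  simp only [eta]; omega

lemma eta_insert_le [M.RankFinite] [M₁.RankFinite] [M₂.RankFinite]
    (hext₁ : IsExtension M₁ M) (hext₂ : IsExtension M₂ M) (hT : M₁.E ∩ M₂.E = M.E)
    (he : e ∈ M₁.E ∪ M₂.E) (Y : Set α) :
    eta M M₁ M₂ (insert e Y) ≤ eta M M₁ M₂ Y + 1 := by
  have hTE₁ : M.E ⊆ M₁.E := hT ▸ inter_subset_left
  have hTE₂ : M.E ⊆ M₂.E := hT ▸ inter_subset_right
  by_cases he1 : e ∈ M₁.E <;> by_cases he2 : e ∈ M₂.E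
  · -- e ∈ M.E
    have heT : e ∈ M.E := hT ▸ ⟨he1, he2⟩
    rw [eta, eta, insert_inter_of_mem he1, insert_inter_of_mem he2, insert_inter_of_mem heT]
    have key : rk M₁ ((Y ∩ M₁.E) ∪ {e}) + rk M₁ (Y ∩ M.E)
        ≤ rk M₁ (Y ∩ M₁.E) + rk M₁ ((Y ∩ M.E) ∪ {e}) :=
      rk_union_le_rk_add (inter_subset_inter_right Y hTE₁)
    rw [union_singleton, union_singleton] at key
    have e1 : rk M (insert e (Y ∩ M.E)) = rk M₁ (insert e (Y ∩ M.E)) :=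
      rkM_eq₁ hext₁ (insert_subset heT inter_subset_right)
    have e2 : rk M (Y ∩ M.E) = rk M₁ (Y ∩ M.E) := rkM_eq₁ hext₁ inter_subset_right
    have h2 := rk_insert_le M₂ e (Y ∩ M₂.E)
    omega
  · -- e ∈ E₁ only
    have heT : e ∉ M.E := fun h => he2 (hTE₂ h)
    rw [eta, eta, insert_inter_of_mem he1, insert_inter_of_notMem he2,
      insert_inter_of_notMem heT]
    have := rk_insert_le M₁ e (Y ∩ M₁.E)
    omega
  · -- e ∈ E₂ only
    have heT : e ∉ M.E := fun h => he1 (hTE₁ h)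
    rw [eta, eta, insert_inter_of_notMem he1, insert_inter_of_mem he2,
      insert_inter_of_notMem heT]
    have := rk_insert_le M₂ e (Y ∩ M₂.E)
    omega
  · exact absurd he (by simp [he1, he2])

lemma eta_union_closure₁ [M.RankFinite] [M₁.RankFinite] [M₂.RankFinite]
    (hext₁ : IsExtension M₁ M) (hext₂ : IsExtension M₂ M) (hT : M₁.E ∩ M₂.E = M.E) :
    eta M M₁ M₂ (Y ∪ M₁.closure (Y ∩ M₁.E)) ≤ eta M M₁ M₂ Y := by
  set A := M₁.closure (Y ∩ M₁.E) with hA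
  have hAE₁ : A ⊆ M₁.E := M₁.closure_subset_ground _
  have hYA : Y ∩ M₁.E ⊆ A := M₁.subset_closure _ inter_subset_right
  have hpart1 : (Y ∪ A) ∩ M₁.E = A := by
    rw [union_inter_distrib_right, inter_eq_self_of_subset_left hAE₁]
    exact union_eq_self_of_subset_left hYA
  set B := A ∩ M.E with hB
  have hBA : A ∩ M₂.E = B := by
    rw [hB, ← hT]
    rw [← inter_assoc, inter_eq_self_of_subset_left hAE₁]
  have hpart2 : (Y ∪ A) ∩ M₂.E = (Y ∩ M₂.E) ∪ B := by
    rw [union_inter_distrib_right, hBA]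
  have hpart3 : (Y ∪ A) ∩ M.E = (Y ∩ M.E) ∪ B := by
    rw [union_inter_distrib_right, hB]
  rw [eta, eta, hpart1, hpart2, hpart3]
  have hr1 : rk M₁ A = rk M₁ (Y ∩ M₁.E) := rk_closure_eq M₁ _
  have key : rk M₂ ((Y ∩ M₂.E) ∪ B) + rk M₂ (Y ∩ M.E)
      ≤ rk M₂ (Y ∩ M₂.E) + rk M₂ ((Y ∩ M.E) ∪ B) :=
    rk_union_le_rk_add (inter_subset_inter_right Y (hT ▸ inter_subset_right))
  have e1 : rk M ((Y ∩ M.E) ∪ B) = rk M₂ ((Y ∩ M.E) ∪ B) :=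
    rkM_eq₁ hext₂ (union_subset inter_subset_right inter_subset_right)
  have e2 : rk M (Y ∩ M.E) = rk M₂ (Y ∩ M.E) := rkM_eq₁ hext₂ inter_subset_right
  omega

lemma eta_union_closure₂ [M.RankFinite] [M₁.RankFinite] [M₂.RankFinite]
    (hext₁ : IsExtension M₁ M) (hext₂ : IsExtension M₂ M) (hT : M₁.E ∩ M₂.E = M.E) :
    eta M M₁ M₂ (Y ∪ M₂.closure (Y ∩ M₂.E)) ≤ eta M M₁ M₂ Y := by
  rw [eta_comm, eta_comm (M₁ := M₁) Y]
  exact eta_union_closure₁ hext₂ hext₁ (by rw [inter_comm, hT])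

end Amalgam


section Lattice

variable {M M₁ M₂ : Matroid α} {X Y Z I : Set α} {e : α}

lemma latticeL_subset_ground (hZ : Z ∈ latticeL M₁ M₂) : Z ⊆ M₁.E ∪ M₂.E := hZ.1

lemma exists_lattice_superset [M.RankFinite] [M₁.RankFinite] [M₂.RankFinite]
    (hext₁ : IsExtension M₁ M) (hext₂ : IsExtension M₂ M) (hT : M₁.E ∩ M₂.E = M.E)
    (hY : Y ⊆ M₁.E ∪ M₂.E) :
    ∃ Z ∈ latticeL M₁ M₂, Y ⊆ Z ∧ eta M M₁ M₂ Z ≤ eta M M₁ M₂ Y := by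
  suffices aux : ∀ n : ℕ, ∀ Y : Set α, Y ⊆ M₁.E ∪ M₂.E →
      (rk M₁ M₁.E - rk M₁ (Y ∩ M₁.E)).toNat < n →
      ∃ Z ∈ latticeL M₁ M₂, Y ⊆ Z ∧ eta M M₁ M₂ Z ≤ eta M M₁ M₂ Y by
    exact aux ((rk M₁ M₁.E - rk M₁ (Y ∩ M₁.E)).toNat + 1) Y hY (Nat.lt_succ_self _)
  intro n
  induction n with
  | zero => exact fun Y _ h => absurd h (Nat.not_lt_zero _)
  | succ n ih =>
    intro Y hY hm
    set F := M₁.closure (Y ∩ M₁.E) with hF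
    set Y₁ := Y ∪ F with hY₁
    set Y₂ := Y₁ ∪ M₂.closure (Y₁ ∩ M₂.E) with hY₂
    have hFE₁ : F ⊆ M₁.E := M₁.closure_subset_ground _
    have hY₁E : Y₁ ⊆ M₁.E ∪ M₂.E := union_subset hY (hFE₁.trans subset_union_left)
    have hY₂E : Y₂ ⊆ M₁.E ∪ M₂.E :=
      union_subset hY₁E ((M₂.closure_subset_ground _).trans subset_union_right)
    have heta : eta M M₁ M₂ Y₂ ≤ eta M M₁ M₂ Y :=
      le_trans (eta_union_closure₂ hext₁ hext₂ hT) (eta_union_closure₁ hext₁ hext₂ hT)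
    have hflat₂ : Y₂ ∩ M₂.E = M₂.closure (Y₁ ∩ M₂.E) := by
      rw [hY₂, union_inter_distrib_right,
        inter_eq_self_of_subset_left (M₂.closure_subset_ground _)]
      exact union_eq_self_of_subset_left (M₂.subset_closure _ inter_subset_right)
    have hFY₂ : F ⊆ Y₂ ∩ M₁.E :=
      subset_inter ((subset_union_right.trans subset_union_left : F ⊆ Y₂)) hFE₁
    by_cases hc : Y₂ ∩ M₁.E ⊆ F
    · refine ⟨Y₂, ⟨hY₂E, ?_, ?_⟩, ?_, heta⟩
      · rw [subset_antisymm hc hFY₂]; exact closure_flat M₁ _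
      · rw [hflat₂]; exact closure_flat M₂ _
      · exact subset_union_left.trans subset_union_left
    · have hrkF : rk M₁ F = rk M₁ (Y ∩ M₁.E) := rk_closure_eq M₁ _
      have hlt : rk M₁ (Y ∩ M₁.E) < rk M₁ (Y₂ ∩ M₁.E) := by
        by_contra hle
        push_neg at hle
        rw [← hrkF] at hle
        exact hc (subset_flat_of_rk_le (closure_flat M₁ _) inter_subset_right hFY₂ hle)
      have hub : rk M₁ (Y₂ ∩ M₁.E) ≤ rk M₁ M₁.E := rk_mono inter_subset_right
      have hm₂ : (rk M₁ M₁.E - rk M₁ (Y₂ ∩ M₁.E)).toNat < n := by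
        have h1 : (rk M₁ M₁.E - rk M₁ (Y₂ ∩ M₁.E)).toNat
            < (rk M₁ M₁.E - rk M₁ (Y ∩ M₁.E)).toNat := by
          rw [Int.toNat_lt_toNat] <;> omega
        omega
      obtain ⟨Z, hZL, hYZ, hZeta⟩ := ih Y₂ hY₂E hm₂
      exact ⟨Z, hZL, (subset_union_left.trans subset_union_left).trans hYZ,
        le_trans hZeta heta⟩

lemma xi_bddBelow [M₂.RankFinite] (hext₂ : IsExtension M₂ M) (hT : M₁.E ∩ M₂.E = M.E)
    (X : Set α) :
    BddBelow {n : ℤ | ∃ Y, X ⊆ Y ∧ Y ⊆ M₁.E ∪ M₂.E ∧ n = eta M M₁ M₂ Y} := by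
  refine ⟨0, ?_⟩
  rintro n ⟨Y, -, -, rfl⟩
  exact eta_nonneg hext₂ hT Y

lemma xi_le_eta [M₂.RankFinite] (hext₂ : IsExtension M₂ M) (hT : M₁.E ∩ M₂.E = M.E)
    (hXY : X ⊆ Y) (hY : Y ⊆ M₁.E ∪ M₂.E) : xi M M₁ M₂ X ≤ eta M M₁ M₂ Y :=
  csInf_le (xi_bddBelow hext₂ hT X) ⟨Y, hXY, hY, rfl⟩

lemma xi_exists_min [M₂.RankFinite] (hext₂ : IsExtension M₂ M) (hT : M₁.E ∩ M₂.E = M.E)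
    (hX : X ⊆ M₁.E ∪ M₂.E) :
    ∃ Y, X ⊆ Y ∧ Y ⊆ M₁.E ∪ M₂.E ∧ eta M M₁ M₂ Y = xi M M₁ M₂ X := by
  have hne : {n : ℤ | ∃ Y, X ⊆ Y ∧ Y ⊆ M₁.E ∪ M₂.E ∧ n = eta M M₁ M₂ Y}.Nonempty :=
    ⟨eta M M₁ M₂ (M₁.E ∪ M₂.E), M₁.E ∪ M₂.E, hX, subset_rfl, rfl⟩
  obtain ⟨Y, hXY, hYE, hY⟩ := Int.csInf_mem hne (xi_bddBelow hext₂ hT X)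
  exact ⟨Y, hXY, hYE, hY.symm⟩

lemma exists_lattice_minimizer [M.RankFinite] [M₁.RankFinite] [M₂.RankFinite]
    (hext₁ : IsExtension M₁ M) (hext₂ : IsExtension M₂ M) (hT : M₁.E ∩ M₂.E = M.E)
    (hX : X ⊆ M₁.E ∪ M₂.E) :
    ∃ Y ∈ latticeL M₁ M₂, X ⊆ Y ∧ eta M M₁ M₂ Y = xi M M₁ M₂ X := by
  obtain ⟨Y₀, hXY₀, hY₀E, hY₀⟩ := xi_exists_min hext₂ hT hX
  obtain ⟨Z, hZL, hYZ, hZeta⟩ := exists_lattice_superset hext₁ hext₂ hT hY₀E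
  refine ⟨Z, hZL, hXY₀.trans hYZ, le_antisymm (by omega) ?_⟩
  exact xi_le_eta hext₂ hT (hXY₀.trans hYZ) hZL.1

lemma xi_nonneg [M₂.RankFinite] (hext₂ : IsExtension M₂ M) (hT : M₁.E ∩ M₂.E = M.E)
    (hX : X ⊆ M₁.E ∪ M₂.E) : 0 ≤ xi M M₁ M₂ X := by
  obtain ⟨Y, -, -, hY⟩ := xi_exists_min hext₂ hT hX
  rw [← hY]
  exact eta_nonneg hext₂ hT Y

lemma xi_mono [M₂.RankFinite] (hext₂ : IsExtension M₂ M) (hT : M₁.E ∩ M₂.E = M.E)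
    (hXY : X ⊆ Y) (hY : Y ⊆ M₁.E ∪ M₂.E) : xi M M₁ M₂ X ≤ xi M M₁ M₂ Y := by
  obtain ⟨Z, hYZ, hZE, hZ⟩ := xi_exists_min hext₂ hT hY
  rw [← hZ]
  exact xi_le_eta hext₂ hT (hXY.trans hYZ) hZE

lemma xi_insert_le [M.RankFinite] [M₁.RankFinite] [M₂.RankFinite]
    (hext₁ : IsExtension M₁ M) (hext₂ : IsExtension M₂ M) (hT : M₁.E ∩ M₂.E = M.E)
    (hX : X ⊆ M₁.E ∪ M₂.E) (he : e ∈ M₁.E ∪ M₂.E) :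
    xi M M₁ M₂ (insert e X) ≤ xi M M₁ M₂ X + 1 := by
  obtain ⟨Y, hXY, hYE, hY⟩ := xi_exists_min hext₂ hT hX
  have h1 : xi M M₁ M₂ (insert e X) ≤ eta M M₁ M₂ (insert e Y) :=
    xi_le_eta hext₂ hT (insert_subset_insert hXY) (insert_subset he hYE)
  have h2 := eta_insert_le hext₁ hext₂ hT he Y
  omega

lemma eta_empty [M.RankFinite] [M₁.RankFinite] [M₂.RankFinite] : eta M M₁ M₂ ∅ = 0 := by
  simp [eta, rk_empty]

lemma xi_empty [M.RankFinite] [M₁.RankFinite] [M₂.RankFinite]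
    (hext₂ : IsExtension M₂ M) (hT : M₁.E ∩ M₂.E = M.E) : xi M M₁ M₂ ∅ = 0 := by
  have h1 : xi M M₁ M₂ ∅ ≤ eta M M₁ M₂ ∅ := xi_le_eta hext₂ hT subset_rfl (empty_subset _)
  have h2 := xi_nonneg hext₂ hT (empty_subset (M₁.E ∪ M₂.E))
  rw [eta_empty] at h1
  omega

end Lattice


section Submod

variable {M M₁ M₂ : Matroid α} {X Y Z I : Set α} {e : α}

lemma xi_submod [M.RankFinite] [M₁.RankFinite] [M₂.RankFinite]
    (hext₁ : IsExtension M₁ M) (hext₂ : IsExtension M₂ M) (hT : M₁.E ∩ M₂.E = M.E)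
    (hsub : ∀ X ∈ latticeL M₁ M₂, ∀ Y ∈ latticeL M₁ M₂,
      eta M M₁ M₂ (X ∩ Y) + eta M M₁ M₂ (X ∪ Y) ≤ eta M M₁ M₂ X + eta M M₁ M₂ Y ∨
      xi M M₁ M₂ (X ∩ Y) + xi M M₁ M₂ (X ∪ Y) ≤ xi M M₁ M₂ X + xi M M₁ M₂ Y)
    (hX : X ⊆ M₁.E ∪ M₂.E) (hY : Y ⊆ M₁.E ∪ M₂.E) :
    xi M M₁ M₂ (X ∩ Y) + xi M M₁ M₂ (X ∪ Y) ≤ xi M M₁ M₂ X + xi M M₁ M₂ Y := by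
  obtain ⟨X', hX'L, hXX', hX'⟩ := exists_lattice_minimizer hext₁ hext₂ hT hX
  obtain ⟨Y', hY'L, hYY', hY'⟩ := exists_lattice_minimizer hext₁ hext₂ hT hY
  have hX'E : X' ⊆ M₁.E ∪ M₂.E := hX'L.1
  have hY'E : Y' ⊆ M₁.E ∪ M₂.E := hY'L.1
  have hiE : X' ∩ Y' ⊆ M₁.E ∪ M₂.E := inter_subset_left.trans hX'E
  have huE : X' ∪ Y' ⊆ M₁.E ∪ M₂.E := union_subset hX'E hY'E
  have hii : X ∩ Y ⊆ X' ∩ Y' := inter_subset_inter hXX' hYY'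
  have huu : X ∪ Y ⊆ X' ∪ Y' := union_subset_union hXX' hYY'
  rcases hsub X' hX'L Y' hY'L with h | h
  · have h1 : xi M M₁ M₂ (X ∩ Y) ≤ eta M M₁ M₂ (X' ∩ Y') := xi_le_eta hext₂ hT hii hiE
    have h2 : xi M M₁ M₂ (X ∪ Y) ≤ eta M M₁ M₂ (X' ∪ Y') := xi_le_eta hext₂ hT huu huE
    omega
  · have h1 : xi M M₁ M₂ (X ∩ Y) ≤ xi M M₁ M₂ (X' ∩ Y') := xi_mono hext₂ hT hii hiE
    have h2 : xi M M₁ M₂ (X ∪ Y) ≤ xi M M₁ M₂ (X' ∪ Y') := xi_mono hext₂ hT huu huE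
    have h3 : xi M M₁ M₂ X' ≤ eta M M₁ M₂ X' := xi_le_eta hext₂ hT subset_rfl hX'E
    have h4 : xi M M₁ M₂ Y' ≤ eta M M₁ M₂ Y' := xi_le_eta hext₂ hT subset_rfl hY'E
    omega

lemma eta_ge_rk₁ [M₂.RankFinite] (hext₂ : IsExtension M₂ M) (hT : M₁.E ∩ M₂.E = M.E)
    (Y : Set α) : rk M₁ (Y ∩ M₁.E) ≤ eta M M₁ M₂ Y := by
  have hTE₂ : M.E ⊆ M₂.E := hT ▸ inter_subset_right
  have h1 : rk M (Y ∩ M.E) = rk M₂ (Y ∩ M.E) := rkM_eq₁ hext₂ inter_subset_right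
  have h2 : rk M₂ (Y ∩ M.E) ≤ rk M₂ (Y ∩ M₂.E) := rk_mono (inter_subset_inter_right Y hTE₂)
  simp only [eta]; omega

lemma xi_comm (X : Set α) : xi M M₁ M₂ X = xi M M₂ M₁ X := by
  unfold xi
  congr 1
  ext n
  constructor
  · rintro ⟨Y, h1, h2, h3⟩
    exact ⟨Y, h1, by rwa [union_comm], by rwa [eta_comm] at h3⟩
  · rintro ⟨Y, h1, h2, h3⟩
    exact ⟨Y, h1, by rwa [union_comm], by rwa [eta_comm]⟩

lemma xi_eq_rk₁ [M₁.RankFinite] [M₂.RankFinite]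
    (hext₂ : IsExtension M₂ M) (hT : M₁.E ∩ M₂.E = M.E)
    (hI : I ⊆ M₁.E) : xi M M₁ M₂ I = rk M₁ I := by
  have hIE : I ⊆ M₁.E ∪ M₂.E := hI.trans subset_union_left
  have hle : xi M M₁ M₂ I ≤ rk M₁ I := by
    have h1 : xi M M₁ M₂ I ≤ eta M M₁ M₂ I := xi_le_eta hext₂ hT subset_rfl hIE
    have e1 : I ∩ M₁.E = I := inter_eq_left.2 hI
    have e2 : I ∩ M₂.E = I ∩ M.E := by
      rw [← hT, ← inter_assoc, inter_eq_self_of_subset_left hI]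
    have e3 : rk M (I ∩ M.E) = rk M₂ (I ∩ M.E) := rkM_eq₁ hext₂ inter_subset_right
    rw [eta, e1, e2, e3] at h1
    omega
  obtain ⟨Y, hIY, hYE, hY⟩ := xi_exists_min hext₂ hT hIE
  have h2 : rk M₁ I ≤ rk M₁ (Y ∩ M₁.E) := rk_mono (subset_inter hIY hI)
  have h3 := eta_ge_rk₁ hext₂ hT (M₁ := M₁) Y
  omega

lemma xi_le_ncard [M.RankFinite] [M₁.RankFinite] [M₂.RankFinite]
    (hext₁ : IsExtension M₁ M) (hext₂ : IsExtension M₂ M) (hT : M₁.E ∩ M₂.E = M.E)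
    (hfin : X.Finite) (hX : X ⊆ M₁.E ∪ M₂.E) : xi M M₁ M₂ X ≤ (X.ncard : ℤ) := by
  refine Set.Finite.induction_on_subset _ hfin ?_ ?_
  · simp [xi_empty hext₂ hT]
  · intro a s haX hsX ha ih
    have hsE : s ⊆ M₁.E ∪ M₂.E := hsX.trans hX
    have h1 := xi_insert_le hext₁ hext₂ hT hsE (hX haX)
    rw [ncard_insert_of_notMem ha (hfin.subset hsX)]
    push_cast
    omega

/-- The key "spanning" lemma: if adding any element of `X` to `I` does not increase `xi`,
then `xi X = xi I`. Uses a maximal lattice minimizer. -/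
lemma xi_spanning [M.RankFinite] [M₁.RankFinite] [M₂.RankFinite]
    (hext₁ : IsExtension M₁ M) (hext₂ : IsExtension M₂ M) (hT : M₁.E ∩ M₂.E = M.E)
    (hxisub : ∀ U V : Set α, U ⊆ M₁.E ∪ M₂.E → V ⊆ M₁.E ∪ M₂.E →
      xi M M₁ M₂ (U ∩ V) + xi M M₁ M₂ (U ∪ V) ≤ xi M M₁ M₂ U + xi M M₁ M₂ V)
    (hIX : I ⊆ X) (hX : X ⊆ M₁.E ∪ M₂.E)
    (h : ∀ e ∈ X, xi M M₁ M₂ (insert e I) = xi M M₁ M₂ I) :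
    xi M M₁ M₂ X = xi M M₁ M₂ I := by
  have hIE : I ⊆ M₁.E ∪ M₂.E := hIX.trans hX
  set S : Set (Set α) := {Y | Y ∈ latticeL M₁ M₂ ∧ I ⊆ Y ∧ eta M M₁ M₂ Y = xi M M₁ M₂ I}
    with hS
  have hSne : ∃ v : ℤ, ∃ Y ∈ S, v = rk M₁ (Y ∩ M₁.E) + rk M₂ (Y ∩ M₂.E) := by
    obtain ⟨Y, hYL, hIY, hY⟩ := exists_lattice_minimizer hext₁ hext₂ hT hIE
    exact ⟨_, Y, ⟨hYL, hIY, hY⟩, rfl⟩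
  have hSbdd : ∀ v : ℤ, (∃ Y ∈ S, v = rk M₁ (Y ∩ M₁.E) + rk M₂ (Y ∩ M₂.E)) →
      v ≤ rk M₁ M₁.E + rk M₂ M₂.E := by
    rintro v ⟨Y, -, rfl⟩
    have h1 : rk M₁ (Y ∩ M₁.E) ≤ rk M₁ M₁.E := rk_mono inter_subset_right
    have h2 : rk M₂ (Y ∩ M₂.E) ≤ rk M₂ M₂.E := rk_mono inter_subset_right
    omega
  obtain ⟨v, ⟨Y, hYS, hv⟩, hvmax⟩ := Int.exists_greatest_of_bdd
    ⟨rk M₁ M₁.E + rk M₂ M₂.E, hSbdd⟩ hSne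
  obtain ⟨hYL, hIY, hYeta⟩ := hYS
  have hYE : Y ⊆ M₁.E ∪ M₂.E := hYL.1
  -- maximality property of Y
  have hmax : ∀ W ∈ S, Y ⊆ W → W = Y := by
    rintro W ⟨hWL, hIW, hWeta⟩ hYW
    have hWE : W ⊆ M₁.E ∪ M₂.E := hWL.1
    have h1 : rk M₁ (Y ∩ M₁.E) ≤ rk M₁ (W ∩ M₁.E) := rk_mono (inter_subset_inter_left _ hYW)
    have h2 : rk M₂ (Y ∩ M₂.E) ≤ rk M₂ (W ∩ M₂.E) := rk_mono (inter_subset_inter_left _ hYW)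
    have h3 : rk M₁ (W ∩ M₁.E) + rk M₂ (W ∩ M₂.E) ≤ v :=
      hvmax _ ⟨W, ⟨hWL, hIW, hWeta⟩, rfl⟩
    have e1 : W ∩ M₁.E ⊆ Y ∩ M₁.E :=
      subset_flat_of_rk_le hYL.2.1 inter_subset_right
        (inter_subset_inter_left _ hYW) (by omega)
    have e2 : W ∩ M₂.E ⊆ Y ∩ M₂.E :=
      subset_flat_of_rk_le hYL.2.2 inter_subset_right
        (inter_subset_inter_left _ hYW) (by omega)
    have : W = (W ∩ M₁.E) ∪ (W ∩ M₂.E) := by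
      rw [← inter_union_distrib_left]
      exact (inter_eq_self_of_subset_left hWE).symm
    rw [this]
    apply subset_antisymm
    · exact union_subset (e1.trans inter_subset_left) (e2.trans inter_subset_left)
    · exact hYW.trans (by rw [← this])
  have hxiY : xi M M₁ M₂ Y = xi M M₁ M₂ I := by
    have h1 : xi M M₁ M₂ Y ≤ eta M M₁ M₂ Y := xi_le_eta hext₂ hT subset_rfl hYE
    have h2 : xi M M₁ M₂ I ≤ xi M M₁ M₂ Y := xi_mono hext₂ hT hIY hYE
    omega
  -- every element of X lies in Y
  have hXY : X ⊆ Y := by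
    intro e he
    obtain ⟨Z, hZL, hIZ, hZeta⟩ := exists_lattice_minimizer hext₁ hext₂ hT
      (insert_subset (hX he) hIE)
    rw [h e he] at hZeta
    have hZE : Z ⊆ M₁.E ∪ M₂.E := hZL.1
    have hIZ' : I ⊆ Z := (subset_insert e I).trans hIZ
    have hxiZ : xi M M₁ M₂ Z = xi M M₁ M₂ I := by
      have h1 : xi M M₁ M₂ Z ≤ eta M M₁ M₂ Z := xi_le_eta hext₂ hT subset_rfl hZE
      have h2 : xi M M₁ M₂ I ≤ xi M M₁ M₂ Z := xi_mono hext₂ hT hIZ' hZE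
      omega
    have hYZ : xi M M₁ M₂ (Y ∪ Z) = xi M M₁ M₂ I := by
      have h1 := hxisub Y Z hYE hZE
      have h2 : xi M M₁ M₂ I ≤ xi M M₁ M₂ (Y ∩ Z) :=
        xi_mono hext₂ hT (subset_inter hIY hIZ') (inter_subset_left.trans hYE)
      have h3 : xi M M₁ M₂ I ≤ xi M M₁ M₂ (Y ∪ Z) :=
        xi_mono hext₂ hT (hIY.trans subset_union_left) (union_subset hYE hZE)
      omega
    obtain ⟨W, hWL, hYZW, hWeta⟩ := exists_lattice_minimizer hext₁ hext₂ hT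
      (union_subset hYE hZE)
    rw [hYZ] at hWeta
    have hWY : W = Y := hmax W ⟨hWL, hIY.trans (subset_union_left.trans hYZW), hWeta⟩
      (subset_union_left.trans hYZW)
    exact hWY ▸ hYZW (Or.inr (hIZ (mem_insert e I)))
  have h1 : xi M M₁ M₂ X ≤ eta M M₁ M₂ Y := xi_le_eta hext₂ hT hXY hYE
  have h2 : xi M M₁ M₂ I ≤ xi M M₁ M₂ X := xi_mono hext₂ hT hIX hX
  omega

end Submod


section Final

variable {M M₁ M₂ : Matroid α} {X Y Z I J S : Set α} {e : α}

lemma xi_union_le_add_ncard [M.RankFinite] [M₁.RankFinite] [M₂.RankFinite]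
    (hext₁ : IsExtension M₁ M) (hext₂ : IsExtension M₂ M) (hT : M₁.E ∩ M₂.E = M.E)
    (hJ : J ⊆ M₁.E ∪ M₂.E) (hS : S.Finite) (hSE : S ⊆ M₁.E ∪ M₂.E) :
    xi M M₁ M₂ (J ∪ S) ≤ xi M M₁ M₂ J + (S.ncard : ℤ) := by
  refine Set.Finite.induction_on_subset _ hS ?_ ?_
  · simp
  · intro a s haS hsS ha ih
    have h1 : J ∪ insert a s = insert a (J ∪ s) := by
      rw [union_insert]
    have h2 := xi_insert_le hext₁ hext₂ hT (union_subset hJ (hsS.trans hSE)) (hSE haS)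
    rw [h1, ncard_insert_of_notMem ha (hS.subset hsS)]
    push_cast
    omega

lemma xi_eq_rk₂ [M₁.RankFinite] [M₂.RankFinite]
    (hext₁ : IsExtension M₁ M) (hT : M₁.E ∩ M₂.E = M.E)
    (hI : I ⊆ M₂.E) : xi M M₁ M₂ I = rk M₂ I := by
  rw [xi_comm]
  exact xi_eq_rk₁ hext₁ (by rw [inter_comm, hT]) hI

end Final

/-- if on every pair of elements of `𝓛(M₁,M₂)` at least one of `η`, `ξ`
is submodular, then `ξ` is submodular everywhere and is the rank function of the
proper amalgam. -/
theorem proper_amalgam_exists (M M₁ M₂ : Matroid α)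
    [M.RankFinite] [M₁.RankFinite] [M₂.RankFinite]
    (hext₁ : IsExtension M₁ M) (hext₂ : IsExtension M₂ M)
    (hT : M₁.E ∩ M₂.E = M.E)
    (hsub : ∀ X ∈ latticeL M₁ M₂, ∀ Y ∈ latticeL M₁ M₂,
      eta M M₁ M₂ (X ∩ Y) + eta M M₁ M₂ (X ∪ Y) ≤ eta M M₁ M₂ X + eta M M₁ M₂ Y ∨
      xi M M₁ M₂ (X ∩ Y) + xi M M₁ M₂ (X ∪ Y) ≤ xi M M₁ M₂ X + xi M M₁ M₂ Y) :
    (∀ X Y : Set α, X ⊆ M₁.E ∪ M₂.E → Y ⊆ M₁.E ∪ M₂.E →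
      xi M M₁ M₂ (X ∩ Y) + xi M M₁ M₂ (X ∪ Y) ≤ xi M M₁ M₂ X + xi M M₁ M₂ Y) ∧
    ∃ A : Matroid α, A.E = M₁.E ∪ M₂.E ∧
      IsExtension A M₁ ∧ IsExtension A M₂ ∧
      ∀ X ⊆ A.E, rk A X = xi M M₁ M₂ X := by
  classical
  have hxisub : ∀ X Y : Set α, X ⊆ M₁.E ∪ M₂.E → Y ⊆ M₁.E ∪ M₂.E →
      xi M M₁ M₂ (X ∩ Y) + xi M M₁ M₂ (X ∪ Y) ≤ xi M M₁ M₂ X + xi M M₁ M₂ Y :=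
    fun X Y hX hY => xi_submod hext₁ hext₂ hT hsub hX hY
  refine ⟨hxisub, ?_⟩
  set Ind : Set α → Prop :=
    fun I => I ⊆ M₁.E ∪ M₂.E ∧ I.Finite ∧ xi M M₁ M₂ I = (I.ncard : ℤ) with hInd
  -- basic facts about Ind
  have ind_empty : Ind ∅ := ⟨empty_subset _, finite_empty, by simp [xi_empty hext₂ hT]⟩
  have ind_subset : ∀ ⦃I J : Set α⦄, Ind J → I ⊆ J → Ind I := by
    rintro I J ⟨hJE, hJfin, hJxi⟩ hIJ
    have hIE : I ⊆ M₁.E ∪ M₂.E := hIJ.trans hJE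
    have hIfin : I.Finite := hJfin.subset hIJ
    refine ⟨hIE, hIfin, le_antisymm (xi_le_ncard hext₁ hext₂ hT hIfin hIE) ?_⟩
    have h1 : xi M M₁ M₂ (I ∪ (J \ I)) ≤ xi M M₁ M₂ I + ((J \ I).ncard : ℤ) :=
      xi_union_le_add_ncard hext₁ hext₂ hT hIE hJfin.diff (diff_subset.trans hJE)
    rw [union_diff_cancel hIJ] at h1
    have h2 : (J \ I).ncard + I.ncard = J.ncard := ncard_diff_add_ncard_of_subset hIJ hJfin
    have h2' : ((J \ I).ncard : ℤ) + (I.ncard : ℤ) = (J.ncard : ℤ) := by exact_mod_cast h2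
    omega
  -- the key step: if insert e I is not independent, xi does not increase
  have ind_step : ∀ I : Set α, Ind I → ∀ e ∈ M₁.E ∪ M₂.E, ¬ Ind (insert e I) →
      xi M M₁ M₂ (insert e I) = xi M M₁ M₂ I := by
    rintro I ⟨hIE, hIfin, hIxi⟩ e heE hnot
    by_cases heI : e ∈ I
    · rw [insert_eq_of_mem heI]
    have hiE : insert e I ⊆ M₁.E ∪ M₂.E := insert_subset heE hIE
    have h1 := xi_insert_le hext₁ hext₂ hT hIE heE
    have h2 : xi M M₁ M₂ I ≤ xi M M₁ M₂ (insert e I) :=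
      xi_mono hext₂ hT (subset_insert e I) hiE
    have h3 : xi M M₁ M₂ (insert e I) ≠ (insert e I).ncard := by
      intro hc
      exact hnot ⟨hiE, hIfin.insert e, hc⟩
    rw [ncard_insert_of_notMem heI hIfin] at h3
    push_cast at h3
    omega
  have ind_aug : ∀ ⦃I J : Set α⦄, Ind I → Ind J → I.encard < J.encard →
      ∃ e ∈ J, e ∉ I ∧ Ind (insert e I) := by
    intro I J hI hJ hcard
    by_contra hcon
    push_neg at hcon
    have key : ∀ e ∈ I ∪ J, xi M M₁ M₂ (insert e I) = xi M M₁ M₂ I := by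
      rintro e (heI | heJ)
      · rw [insert_eq_of_mem heI]
      · by_cases heI : e ∈ I
        · rw [insert_eq_of_mem heI]
        · exact ind_step I hI e (hJ.1 heJ) (hcon e heJ heI)
    have hsp : xi M M₁ M₂ (I ∪ J) = xi M M₁ M₂ I :=
      xi_spanning hext₁ hext₂ hT hxisub subset_union_left (union_subset hI.1 hJ.1) key
    have hmono : xi M M₁ M₂ J ≤ xi M M₁ M₂ (I ∪ J) :=
      xi_mono hext₂ hT subset_union_right (union_subset hI.1 hJ.1)
    have hncard : I.ncard < J.ncard := by
      rwa [← Nat.cast_lt (α := ℕ∞), hI.2.1.cast_ncard_eq, hJ.2.1.cast_ncard_eq]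
    have hxiI := hI.2.2
    have hxiJ := hJ.2.2
    have : (I.ncard : ℤ) < (J.ncard : ℤ) := by exact_mod_cast hncard
    omega
  have ind_bdd : ∃ n : ℕ, ∀ I, Ind I → I.encard ≤ n := by
    refine ⟨(xi M M₁ M₂ (M₁.E ∪ M₂.E)).toNat, ?_⟩
    rintro I ⟨hIE, hIfin, hIxi⟩
    have h1 : xi M M₁ M₂ I ≤ xi M M₁ M₂ (M₁.E ∪ M₂.E) := xi_mono hext₂ hT hIE subset_rfl
    have h2 : I.ncard ≤ (xi M M₁ M₂ (M₁.E ∪ M₂.E)).toNat := by omega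
    rw [← hIfin.cast_ncard_eq]
    exact_mod_cast h2
  set NA := IndepMatroid.ofBddAugment (M₁.E ∪ M₂.E) Ind ind_empty ind_subset ind_aug
    ind_bdd (fun I hI => hI.1) with hNA
  set A := NA.matroid with hA
  have hAE : A.E = M₁.E ∪ M₂.E := rfl
  have hAind : ∀ I : Set α, A.Indep I ↔ Ind I := fun I => Iff.rfl
  haveI hAfin : A.RankFinite := by
    obtain ⟨B, hB⟩ := A.exists_isBase
    exact hB.rankFinite_of_finite ((hAind B).1 hB.indep).2.1
  -- the rank of A is xi
  have hrk : ∀ X ⊆ A.E, rk A X = xi M M₁ M₂ X := by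
    intro X hX
    obtain ⟨I, hI⟩ := A.exists_isBasis' X
    have hIind : Ind I := (hAind I).1 hI.indep
    have key : ∀ e ∈ X, xi M M₁ M₂ (insert e I) = xi M M₁ M₂ I := by
      intro e he
      by_cases heI : e ∈ I
      · rw [insert_eq_of_mem heI]
      · refine ind_step I hIind e (hX he) ?_
        intro hc
        exact hI.insert_not_indep ⟨he, heI⟩ ((hAind _).2 hc)
    have hsp : xi M M₁ M₂ X = xi M M₁ M₂ I :=
      xi_spanning hext₁ hext₂ hT hxisub hI.subset hX key
    rw [rk_eq_basis' hI, hsp, hIind.2.2]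
  -- extension properties
  have hext : ∀ (N : Matroid α), N.E ⊆ M₁.E ∪ M₂.E →
      (∀ I : Set α, I ⊆ N.E → (N.Indep I ↔ I.Finite ∧ rk N I = (I.ncard : ℤ))) →
      (∀ I : Set α, I ⊆ N.E → xi M M₁ M₂ I = rk N I) →
      IsExtension A N := by
    intro N hNE hNind hNxi
    refine ⟨hNE, ?_⟩
    apply Matroid.ext_indep
    · rw [Matroid.restrict_ground_eq]
    · intro I hIN
      rw [Matroid.restrict_indep_iff, hAind, hNind I hIN]
      constructor
      · rintro ⟨hfin, hrkN⟩
        exact ⟨⟨(hIN.trans hNE), hfin, by rw [hNxi I hIN, hrkN]⟩, hIN⟩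
      · rintro ⟨⟨hIE, hfin, hxi⟩, -⟩
        exact ⟨hfin, by rw [← hNxi I hIN, hxi]⟩
  refine ⟨A, hAE, ?_, ?_, hrk⟩
  · exact hext M₁ subset_union_left (fun I hI => indep_iff_rk_eq hI)
      (fun I hI => xi_eq_rk₁ hext₂ hT hI)
  · exact hext M₂ subset_union_right (fun I hI => indep_iff_rk_eq hI)
      (fun I hI => xi_eq_rk₂ hext₁ hT hI)

end StickyKantor
end

section
/- Let M be a matroid, F and H flats forming a non-modular pair with H a hyperplane, such that some extension N₁ of M makes (cl_{N₁}(F), cl_{N₁}(H)) a modular pair, and some extension N₂ of M has the property that in every extension N of N₂ the pair (cl_N(F), cl_N(H)) is non-modular. Then M is not sticky: there exist two extensions of M admitting no amalgam. -/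
open Set

namespace StickyKantor

variable {α : Type*}

/-- The extended rank used to define `rk`. -/
noncomputable def er (M : Matroid α) (X : Set α) : ℕ∞ :=
  ⨆ I ∈ {I : Set α | M.Indep I ∧ I ⊆ X}, I.encard

lemma rk_eq_toNat_er (M : Matroid α) (X : Set α) : rk M X = ((er M X).toNat : ℤ) := rfl

lemma encard_le_er {M : Matroid α} {I X : Set α} (hI : M.Indep I) (hIX : I ⊆ X) :
    I.encard ≤ er M X :=
  le_iSup₂_of_le I (⟨hI, hIX⟩ : I ∈ {I : Set α | M.Indep I ∧ I ⊆ X}) le_rfl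

lemma er_le_iff {M : Matroid α} {X : Set α} {c : ℕ∞} :
    er M X ≤ c ↔ ∀ I, M.Indep I → I ⊆ X → I.encard ≤ c := by
  simp only [er, iSup₂_le_iff, mem_setOf_eq, and_imp]

lemma er_mono {M : Matroid α} {X Y : Set α} (h : X ⊆ Y) : er M X ≤ er M Y :=
  er_le_iff.2 fun _ hI hIX => encard_le_er hI (hIX.trans h)

lemma basis_er_eq {M : Matroid α} {I X : Set α} (hIX : M.IsBasis I X) : er M X = I.encard := by
  refine le_antisymm (er_le_iff.2 fun J hJ hJX => ?_) (encard_le_er hIX.indep hIX.subset)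
  obtain ⟨J', hJ', hJJ'⟩ := hJ.subset_isBasis_of_subset hJX hIX.subset_ground
  exact (encard_mono hJJ').trans_eq (hJ'.encard_eq_encard hIX)

lemma er_restrict {M : Matroid α} {X R : Set α} (hXR : X ⊆ R) :
    er (M.restrict R) X = er M X := by
  refine le_antisymm (er_le_iff.2 fun J hJ hJX => ?_) (er_le_iff.2 fun J hJ hJX => ?_)
  · exact encard_le_er (Matroid.restrict_indep_iff.1 hJ).1 hJX
  · exact encard_le_er (Matroid.restrict_indep_iff.2 ⟨hJ, hJX.trans hXR⟩) hJX

lemma er_closure_eq {M : Matroid α} {X : Set α} (hX : X ⊆ M.E) :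
    er M (M.closure X) = er M X := by
  obtain ⟨I, hI⟩ := M.exists_isBasis X hX
  rw [basis_er_eq hI.isBasis_closure_right, basis_er_eq hI]

lemma er_closure_union {M : Matroid α} {X Y : Set α} (hX : X ⊆ M.E) (hY : Y ⊆ M.E) :
    er M (M.closure X ∪ M.closure Y) = er M (X ∪ Y) := by
  refine le_antisymm ?_
    (er_mono (union_subset_union (M.subset_closure X hX) (M.subset_closure Y hY)))
  refine (er_mono (union_subset (M.closure_subset_closure subset_union_left)
    (M.closure_subset_closure subset_union_right))).trans_eq
    (er_closure_eq (union_subset hX hY))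

lemma er_submod {M : Matroid α} {X Y : Set α} (hX : X ⊆ M.E) (hY : Y ⊆ M.E) :
    er M (X ∪ Y) + er M (X ∩ Y) ≤ er M X + er M Y := by
  obtain ⟨I, hI⟩ := M.exists_isBasis (X ∩ Y) (inter_subset_left.trans hX)
  obtain ⟨J, hJ, hIJ⟩ := hI.indep.subset_isBasis_of_subset
    (hI.subset.trans (inter_subset_left.trans subset_union_left)) (union_subset hX hY)
  rw [basis_er_eq hJ, basis_er_eq hI]
  have h1 : (J ∩ X).encard + (J ∩ Y).encard = J.encard + (J ∩ (X ∩ Y)).encard := by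
    rw [← encard_union_add_encard_inter]
    congr 1
    · rw [← inter_union_distrib_left, inter_eq_self_of_subset_left hJ.subset]
    · congr 1
      ext x
      simp only [mem_inter_iff]
      tauto
  calc J.encard + I.encard
      ≤ J.encard + (J ∩ (X ∩ Y)).encard :=
        add_le_add_right (encard_mono (subset_inter hIJ hI.subset)) _
    _ = (J ∩ X).encard + (J ∩ Y).encard := h1.symm
    _ ≤ er M X + er M Y :=
        add_le_add (encard_le_er (hJ.indep.subset inter_subset_left) inter_subset_right)
          (encard_le_er (hJ.indep.subset inter_subset_left) inter_subset_right)

lemma er_lt_top (M : Matroid α) [M.RankFinite] (X : Set α) : er M X < ⊤ := by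
  obtain ⟨B, hB⟩ := M.exists_isBase
  refine lt_of_le_of_lt (er_le_iff.2 fun I hI _ => ?_) hB.finite.encard_lt_top
  obtain ⟨B', hB', hIB'⟩ := hI.exists_isBase_superset
  exact (encard_mono hIB').trans_eq (hB'.encard_eq_encard_of_isBase hB)

lemma closure_restrict_subset (M : Matroid α) {R X : Set α} (hXR : X ⊆ R) (hR : R ⊆ M.E) :
    (M.restrict R).closure X ⊆ M.closure X := by
  have hXR' : X ⊆ (M.restrict R).E := by rwa [Matroid.restrict_ground_eq]
  obtain ⟨I, hI⟩ := (M.restrict R).exists_isBasis X hXR'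
  rw [← hI.closure_eq_closure]
  have hIind : M.Indep I := (Matroid.restrict_indep_iff.1 hI.indep).1
  intro x hx
  rw [hI.indep.mem_closure_iff] at hx
  rcases hx with hdep | hxI
  · have hxcl : x ∈ M.closure I := by
      rw [hIind.mem_closure_iff]
      left
      rw [Matroid.dep_iff] at hdep ⊢
      refine ⟨fun hind => hdep.1 (Matroid.restrict_indep_iff.2 ⟨hind, ?_⟩), ?_⟩
      · simpa [Matroid.restrict_ground_eq] using hdep.2
      · exact (by simpa [Matroid.restrict_ground_eq] using hdep.2 : insert x I ⊆ R).trans hR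
    exact (M.closure_subset_closure hI.subset) hxcl
  · exact (M.subset_closure X (hXR.trans hR)) (hI.subset hxI)

lemma enat_eq_iff_toNat {a b u i : ℕ∞} (ha : a ≠ ⊤) (hb : b ≠ ⊤) (hu : u ≠ ⊤) (hi : i ≠ ⊤) :
    a + b = u + i ↔ ((a.toNat : ℤ) + (b.toNat : ℤ) = (u.toNat : ℤ) + (i.toNat : ℤ)) := by
  lift a to ℕ using ha
  lift b to ℕ using hb
  lift u to ℕ using hu
  lift i to ℕ using hi
  rw [← Nat.cast_add, ← Nat.cast_add, Nat.cast_inj]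
  simp only [ENat.toNat_coe]
  constructor <;> intro h <;> omega

/-- a matroid with a non-modular flat–hyperplane pair that one
extension makes modular and another extension keeps non-modular forever is not
sticky. -/
theorem not_sticky (M : Matroid α) [M.RankFinite]
    (F H : Set α) (hF : M.IsFlat F) (hH : IsHyperplane M H)
    (hnm : 0 < mdefect M F H)
    (N₁ N₂ : Matroid α) (hN₁ : IsExtension N₁ M) (hN₂ : IsExtension N₂ M)
    (hmeet : N₁.E ∩ N₂.E = M.E)
    (hmod : ModularPair N₁ (N₁.closure F) (N₁.closure H))
    (hnonmod : ∀ N : Matroid α, IsExtension N N₂ →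
      ¬ ModularPair N (N.closure F) (N.closure H)) :
    ¬ Sticky M := by
  intro hS
  obtain ⟨A, hAE, hA1, hA2⟩ := hS N₁ N₂ hN₁ hN₂ hmeet
  obtain ⟨hME1, hMr1⟩ := hN₁
  obtain ⟨hN1A, hN1r⟩ := hA1
  have hFE : F ⊆ M.E := hF.subset_ground
  have hHE : H ⊆ M.E := hH.1.subset_ground
  have hFN1 : F ⊆ N₁.E := hFE.trans hME1
  have hHN1 : H ⊆ N₁.E := hHE.trans hME1
  have hFA : F ⊆ A.E := hFN1.trans hN1A
  have hHA : H ⊆ A.E := hHN1.trans hN1A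
  have erM_N1 : ∀ X : Set α, X ⊆ M.E → er M X = er N₁ X := fun X hX => by
    rw [hMr1]; exact er_restrict hX
  have erN1_A : ∀ X : Set α, X ⊆ N₁.E → er N₁ X = er A X := fun X hX => by
    rw [hN1r]; exact er_restrict hX
  have haf : er M F ≠ ⊤ := (er_lt_top M F).ne
  have hbf : er M H ≠ ⊤ := (er_lt_top M H).ne
  have huf : er M (F ∪ H) ≠ ⊤ := (er_lt_top M _).ne
  -- values in N₁
  have ea1 : er N₁ (N₁.closure F) = er M F := by
    rw [er_closure_eq hFN1, erM_N1 F hFE]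
  have eb1 : er N₁ (N₁.closure H) = er M H := by
    rw [er_closure_eq hHN1, erM_N1 H hHE]
  have eu1 : er N₁ (N₁.closure F ∪ N₁.closure H) = er M (F ∪ H) := by
    rw [er_closure_union hFN1 hHN1, erM_N1 (F ∪ H) (union_subset hFE hHE)]
  set i1 := er N₁ (N₁.closure F ∩ N₁.closure H) with hi1
  have hi1f : i1 ≠ ⊤ := by
    rw [hi1]
    exact ne_top_of_le_ne_top (by rw [ea1]; exact haf) (er_mono inter_subset_left)
  have fa1 : er N₁ (N₁.closure F) ≠ ⊤ := by rw [ea1]; exact haf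
  have fb1 : er N₁ (N₁.closure H) ≠ ⊤ := by rw [eb1]; exact hbf
  have fu1 : er N₁ (N₁.closure F ∪ N₁.closure H) ≠ ⊤ := by rw [eu1]; exact huf
  have hmodE : er N₁ (N₁.closure F) + er N₁ (N₁.closure H)
      = er N₁ (N₁.closure F ∪ N₁.closure H) + i1 :=
    (enat_eq_iff_toNat fa1 fb1 fu1 hi1f).2 hmod
  have hkey1 : er M F + er M H = er M (F ∪ H) + i1 := by
    rw [← ea1, ← eb1, ← eu1]; exact hmodE
  -- values in A
  have eaA : er A (A.closure F) = er M F := by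
    rw [er_closure_eq hFA, ← erN1_A F hFN1, ← erM_N1 F hFE]
  have ebA : er A (A.closure H) = er M H := by
    rw [er_closure_eq hHA, ← erN1_A H hHN1, ← erM_N1 H hHE]
  have euA : er A (A.closure F ∪ A.closure H) = er M (F ∪ H) := by
    rw [er_closure_union hFA hHA, ← erN1_A (F ∪ H) (union_subset hFN1 hHN1),
      ← erM_N1 (F ∪ H) (union_subset hFE hHE)]
  set iA := er A (A.closure F ∩ A.closure H) with hiA
  have hiAf : iA ≠ ⊤ := by
    rw [hiA]
    exact ne_top_of_le_ne_top (by rw [eaA]; exact haf) (er_mono inter_subset_left)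
  have hsubF : N₁.closure F ⊆ A.closure F := by
    rw [hN1r]; exact closure_restrict_subset A hFN1 hN1A
  have hsubH : N₁.closure H ⊆ A.closure H := by
    rw [hN1r]; exact closure_restrict_subset A hHN1 hN1A
  have hi1A : i1 ≤ iA := by
    rw [hi1, erN1_A _ (inter_subset_left.trans (N₁.closure_subset_ground F)), hiA]
    exact er_mono (inter_subset_inter hsubF hsubH)
  have hsm : er M (F ∪ H) + iA ≤ er M F + er M H := by
    rw [← eaA, ← ebA, ← euA, hiA]
    exact er_submod (A.closure_subset_ground F) (A.closure_subset_ground H)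
  have h3 : er M F + er M H ≤ er M (F ∪ H) + iA :=
    hkey1.trans_le (add_le_add_right hi1A _)
  have heq : er A (A.closure F) + er A (A.closure H)
      = er A (A.closure F ∪ A.closure H) + iA := by
    rw [eaA, ebA, euA]
    exact (le_antisymm hsm h3).symm
  have faA : er A (A.closure F) ≠ ⊤ := by rw [eaA]; exact haf
  have fbA : er A (A.closure H) ≠ ⊤ := by rw [ebA]; exact hbf
  have fuA : er A (A.closure F ∪ A.closure H) ≠ ⊤ := by rw [euA]; exact huf
  have hMP : ModularPair A (A.closure F) (A.closure H) :=
    (enat_eq_iff_toNat faA fbA fuA hiAf).1 heq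
  exact hnonmod A hA2 hMP
end StickyKantor
end
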